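/- Grothendieck's inequality in norm form: there is a finite constant K_G (Grothendieck's constant over F) such that for all l,m,n ∈ ℕ and all nonzero X ∈ F^{l×m}, M ∈ F^{m×n}, Y ∈ F^{n×l}: |tr(XMY)| ≤ K_G · ‖X‖_{1,2}‖Y‖_{2,∞}‖M‖_{∞,1}. -/

import Mathlib

set_option maxHeartbeats 1600000


open scoped ENNReal BigOperators
open Matrix

/-- The vector ℓ^p norm on `Fin n → 𝕜` for `p ∈ [1,∞]`. -/
noncomputable def lpNorm (p : ℝ≥0∞) {n : ℕ} {𝕜 : Type*} [RCLike 𝕜] (x : Fin n → 𝕜) : ℝ :=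
  if p = ∞ then ⨆ i, ‖x i‖ else (∑ i, ‖x i‖ ^ p.toReal) ^ (1 / p.toReal)

/-- The matrix (p,q)-operator norm: `max_{z ≠ 0} ‖Az‖_q / ‖z‖_p`. -/
noncomputable def opNorm (p q : ℝ≥0∞) {m n : ℕ} {𝕜 : Type*} [RCLike 𝕜]
    (A : Matrix (Fin m) (Fin n) 𝕜) : ℝ :=
  ⨆ z : {z : Fin n → 𝕜 // z ≠ 0}, lpNorm q (A.mulVec z.1) / lpNorm p z.1



namespace Groth


open Finset

variable {ι : Type} [Fintype ι] [DecidableEq ι]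

/-- sign of a boolean, as a real number -/
def sgn (b : Bool) : ℝ := if b then 1 else -1

lemma sgn_sq (b : Bool) : sgn b ^ 2 = 1 := by cases b <;> simp [sgn]
lemma abs_sgn (b : Bool) : |sgn b| = 1 := by cases b <;> simp [sgn]
lemma sgn_not (b : Bool) : sgn (!b) = - sgn b := by cases b <;> simp [sgn]

/-- flip involution kills functions independent of coordinate `T` times `sgn (ω T)` -/
lemma sum_mul_sgn_eq_zero (T : ι) (h : (ι → Bool) → ℝ)
    (hh : ∀ ω x, h (Function.update ω T x) = h ω) :
    ∑ ω : ι → Bool, h ω * sgn (ω T) = 0 := by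
  have hinv : Function.Involutive (fun ω : ι → Bool => Function.update ω T (!(ω T))) := by
    intro ω
    simp [Function.update_idem]
  set e : (ι → Bool) → (ι → Bool) := fun ω => Function.update ω T (!(ω T)) with he
  have h1 : ∑ ω : ι → Bool, h (e ω) * sgn ((e ω) T) = ∑ ω : ι → Bool, h ω * sgn (ω T) :=
    Fintype.sum_bijective e hinv.bijective _ _ (fun ω => rfl)
  have h2 : ∀ ω : ι → Bool, h (e ω) * sgn ((e ω) T) = - (h ω * sgn (ω T)) := by
    intro ω
    have hT' : (e ω) T = !(ω T) := by simp [he]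
    rw [hT', hh ω _, sgn_not]
    ring
  rw [Finset.sum_congr rfl (fun ω _ => h2 ω)] at h1
  rw [Finset.sum_neg_distrib] at h1
  linarith

/-- Rademacher sum over a finset of coordinates -/
def Z (s : Finset ι) (u : ι → ℝ) (ω : ι → Bool) : ℝ := ∑ t ∈ s, u t * sgn (ω t)

lemma Z_update (s : Finset ι) (u : ι → ℝ) {T : ι} (hT : T ∉ s) (ω : ι → Bool) (b : Bool) :
    Z s u (Function.update ω T b) = Z s u ω := by
  refine Finset.sum_congr rfl fun t ht => ?_
  rw [Function.update_of_ne (ne_of_mem_of_not_mem ht hT) _ ω]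

lemma sum_Z_mul_Z (s : Finset ι) (u v : ι → ℝ) :
    ∑ ω : ι → Bool, Z s u ω * Z s v ω = (Fintype.card (ι → Bool) : ℝ) * ∑ t ∈ s, u t * v t := by
  induction s using Finset.induction with
  | empty => simp [Z]
  | insert T s' hT ih =>
    have key : ∀ ω : ι → Bool,
        Z (insert T s') u ω * Z (insert T s') v ω
          = Z s' u ω * Z s' v ω + u T * v T
            + (u T * Z s' v ω + v T * Z s' u ω) * sgn (ω T) := by
      intro ω
      have hσ : sgn (ω T) ^ 2 = 1 := sgn_sq _
      have h1 : Z (insert T s') u ω = u T * sgn (ω T) + Z s' u ω := by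
        rw [Z, Finset.sum_insert hT]; rfl
      have h2 : Z (insert T s') v ω = v T * sgn (ω T) + Z s' v ω := by
        rw [Z, Finset.sum_insert hT]; rfl
      rw [h1, h2]
      linear_combination (u T * v T) * hσ
    rw [Finset.sum_congr rfl (fun ω _ => key ω)]
    have hz : ∑ ω : ι → Bool, (u T * Z s' v ω + v T * Z s' u ω) * sgn (ω T) = 0 := by
      apply sum_mul_sgn_eq_zero
      intro ω b
      rw [Z_update _ _ hT, Z_update _ _ hT]
    rw [Finset.sum_add_distrib, Finset.sum_add_distrib, hz, add_zero, ih, Finset.sum_const,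
      Finset.card_univ, nsmul_eq_mul, Finset.sum_insert hT]
    ring

lemma sum_Z_pow_four_le (s : Finset ι) (u : ι → ℝ) :
    ∑ ω : ι → Bool, Z s u ω ^ 4 ≤ 3 * (Fintype.card (ι → Bool) : ℝ) * (∑ t ∈ s, u t ^ 2) ^ 2 := by
  induction s using Finset.induction with
  | empty => simp [Z]
  | insert T s' hT ih =>
    have key : ∀ ω : ι → Bool,
        Z (insert T s') u ω ^ 4
          = Z s' u ω ^ 4 + 6 * u T ^ 2 * Z s' u ω ^ 2 + u T ^ 4
            + (4 * u T * Z s' u ω ^ 3 + 4 * u T ^ 3 * Z s' u ω) * sgn (ω T) := by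
      intro ω
      have hσ : sgn (ω T) ^ 2 = 1 := sgn_sq _
      have h1 : Z (insert T s') u ω = u T * sgn (ω T) + Z s' u ω := by
        rw [Z, Finset.sum_insert hT]; rfl
      rw [h1]
      linear_combination (6 * (Z s' u ω)^2 * (u T)^2 + 4 * (Z s' u ω) * (u T)^3 * sgn (ω T)
        + (u T)^4 * (sgn (ω T)^2 + 1)) * hσ
    rw [Finset.sum_congr rfl (fun ω _ => key ω)]
    have hz : ∑ ω : ι → Bool, (4 * u T * Z s' u ω ^ 3 + 4 * u T ^ 3 * Z s' u ω) * sgn (ω T) = 0 := by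
      apply sum_mul_sgn_eq_zero
      intro ω b
      rw [Z_update _ _ hT]
    have h2 : ∑ ω : ι → Bool, 6 * u T ^ 2 * Z s' u ω ^ 2
        = 6 * u T ^ 2 * ((Fintype.card (ι → Bool) : ℝ) * ∑ t ∈ s', u t ^ 2) := by
      rw [← Finset.mul_sum]
      congr 1
      have := sum_Z_mul_Z s' u u
      simpa [sq] using this
    rw [Finset.sum_add_distrib, Finset.sum_add_distrib, Finset.sum_add_distrib, hz, add_zero, h2,
      Finset.sum_const, Finset.card_univ, nsmul_eq_mul, Finset.sum_insert hT]
    have hS : (0:ℝ) ≤ ∑ t ∈ s', u t ^ 2 := Finset.sum_nonneg fun t _ => sq_nonneg _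
    have hD : (0:ℝ) ≤ (Fintype.card (ι → Bool) : ℝ) := Nat.cast_nonneg _
    nlinarith [ih, mul_nonneg hD (pow_nonneg (sq_nonneg (u T)) 2)]



open Finset


/-- Grothendieck inequality predicate: `c` is a valid constant for sizes `m n`. -/
def GIneq (m n : ℕ) (c : ℝ) : Prop :=
  ∀ (ι : Type) [Fintype ι] (x : Fin m → ι → ℝ) (y : Fin n → ι → ℝ)
    (A : Matrix (Fin m) (Fin n) ℝ),
    (∀ i, ∑ t, x i t ^ 2 ≤ 1) → (∀ j, ∑ t, y j t ^ 2 ≤ 1) →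
    (∀ (u : Fin m → ℝ) (v : Fin n → ℝ), (∀ i, |u i| ≤ 1) → (∀ j, |v j| ≤ 1) →
      |∑ i, ∑ j, A i j * (u i * v j)| ≤ 1) →
    |∑ i, ∑ j, A i j * (∑ t, x i t * y j t)| ≤ c

lemma GIneq.mono {m n : ℕ} {c c' : ℝ} (hcc : c ≤ c') (h : GIneq m n c) : GIneq m n c' := by
  intro ι _ x y A hx hy hA
  exact le_trans (h ι x y A hx hy hA) hcc

lemma sum_swap3 {α β γ : Type*} [Fintype α] [Fintype β] [Fintype γ] (f : α → β → γ → ℝ) :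
    ∑ a, ∑ b, ∑ c, f a b c = ∑ c, ∑ a, ∑ b, f a b c := by
  have h1 : ∀ a, ∑ b, ∑ c, f a b c = ∑ c, ∑ b, f a b c := fun a => Finset.sum_comm
  simp_rw [h1]
  exact Finset.sum_comm

lemma pull_const {m n : ℕ} (A : Matrix (Fin m) (Fin n) ℝ) (k : ℝ) (S : Fin m → Fin n → ℝ) :
    ∑ i, ∑ j, A i j * (k * S i j) = k * ∑ i, ∑ j, A i j * S i j := by
  simp_rw [Finset.mul_sum]
  refine Finset.sum_congr rfl fun i _ => Finset.sum_congr rfl fun j _ => by ring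

/-- the trivial a priori bound -/
lemma gineq_base (m n : ℕ) : GIneq m n (Real.sqrt (m * n)) := by
  intro ι _ x y A hx hy hA
  classical
  set P : ι → ℝ := fun t => Real.sqrt (∑ i, x i t ^ 2) with hP
  set Q : ι → ℝ := fun t => Real.sqrt (∑ j, y j t ^ 2) with hQ
  have hPt : ∀ t, |∑ i, ∑ j, A i j * (x i t * y j t)| ≤ P t * Q t := by
    intro t
    by_cases hp : ∑ i, x i t ^ 2 = 0
    · have hx0 : ∀ i, x i t = 0 := by
        intro i
        have := (Finset.sum_eq_zero_iff_of_nonneg (fun i _ => sq_nonneg (x i t))).1 hp i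
          (Finset.mem_univ i)
        exact pow_eq_zero_iff (two_ne_zero) |>.1 this
      have : ∑ i, ∑ j, A i j * (x i t * y j t) = 0 := by
        apply Finset.sum_eq_zero; intro i _;
        apply Finset.sum_eq_zero; intro j _; rw [hx0 i]; ring
      rw [this]
      simpa using mul_nonneg (Real.sqrt_nonneg _) (Real.sqrt_nonneg _)
    by_cases hq : ∑ j, y j t ^ 2 = 0
    · have hy0 : ∀ j, y j t = 0 := by
        intro j
        have := (Finset.sum_eq_zero_iff_of_nonneg (fun j _ => sq_nonneg (y j t))).1 hq j
          (Finset.mem_univ j)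
        exact pow_eq_zero_iff (two_ne_zero) |>.1 this
      have : ∑ i, ∑ j, A i j * (x i t * y j t) = 0 := by
        apply Finset.sum_eq_zero; intro i _;
        apply Finset.sum_eq_zero; intro j _; rw [hy0 j]; ring
      rw [this]
      simpa using mul_nonneg (Real.sqrt_nonneg _) (Real.sqrt_nonneg _)
    have hxs : (0:ℝ) ≤ ∑ i, x i t ^ 2 := Finset.sum_nonneg fun i _ => sq_nonneg _
    have hys : (0:ℝ) ≤ ∑ j, y j t ^ 2 := Finset.sum_nonneg fun j _ => sq_nonneg _
    have hp' : 0 < P t := Real.sqrt_pos.2 (lt_of_le_of_ne hxs (Ne.symm hp))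
    have hq' : 0 < Q t := Real.sqrt_pos.2 (lt_of_le_of_ne hys (Ne.symm hq))
    have hPsq : P t ^ 2 = ∑ i, x i t ^ 2 := Real.sq_sqrt hxs
    have hQsq : Q t ^ 2 = ∑ j, y j t ^ 2 := Real.sq_sqrt hys
    have hu : ∀ i, |x i t / P t| ≤ 1 := by
      intro i
      rw [abs_div, abs_of_pos hp', div_le_one hp']
      have : x i t ^ 2 ≤ P t ^ 2 := by
        rw [hPsq]
        exact Finset.single_le_sum (fun i _ => sq_nonneg (x i t)) (Finset.mem_univ i)
      calc |x i t| = Real.sqrt (x i t ^ 2) := (Real.sqrt_sq_eq_abs _).symm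
        _ ≤ Real.sqrt (P t ^ 2) := Real.sqrt_le_sqrt this
        _ = P t := Real.sqrt_sq hp'.le
    have hv : ∀ j, |y j t / Q t| ≤ 1 := by
      intro j
      rw [abs_div, abs_of_pos hq', div_le_one hq']
      have : y j t ^ 2 ≤ Q t ^ 2 := by
        rw [hQsq]
        exact Finset.single_le_sum (fun j _ => sq_nonneg (y j t)) (Finset.mem_univ j)
      calc |y j t| = Real.sqrt (y j t ^ 2) := (Real.sqrt_sq_eq_abs _).symm
        _ ≤ Real.sqrt (Q t ^ 2) := Real.sqrt_le_sqrt this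
        _ = Q t := Real.sqrt_sq hq'.le
    have key := hA (fun i => x i t / P t) (fun j => y j t / Q t) hu hv
    have hrw : ∑ i, ∑ j, A i j * (x i t * y j t)
        = (P t * Q t) * ∑ i, ∑ j, A i j * (x i t / P t * (y j t / Q t)) := by
      rw [Finset.mul_sum]
      refine Finset.sum_congr rfl fun i _ => ?_
      rw [Finset.mul_sum]
      refine Finset.sum_congr rfl fun j _ => ?_
      field_simp
    rw [hrw, abs_mul, abs_of_pos (mul_pos hp' hq')]
    calc P t * Q t * |∑ i, ∑ j, A i j * (x i t / P t * (y j t / Q t))|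
        ≤ P t * Q t * 1 := by
          exact mul_le_mul_of_nonneg_left key (mul_pos hp' hq').le
      _ = P t * Q t := mul_one _
  have hswap : ∑ i, ∑ j, A i j * (∑ t, x i t * y j t)
      = ∑ t : ι, ∑ i, ∑ j, A i j * (x i t * y j t) := by
    simp_rw [Finset.mul_sum]
    exact sum_swap3 _
  rw [hswap]
  calc |∑ t : ι, ∑ i, ∑ j, A i j * (x i t * y j t)|
      ≤ ∑ t : ι, |∑ i, ∑ j, A i j * (x i t * y j t)| := Finset.abs_sum_le_sum_abs _ _
    _ ≤ ∑ t : ι, P t * Q t := Finset.sum_le_sum fun t _ => hPt t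
    _ ≤ Real.sqrt (m * n) := by
        have cs := Finset.sum_mul_sq_le_sq_mul_sq Finset.univ P Q
        have hPsum : ∑ t : ι, P t ^ 2 ≤ (m : ℝ) := by
          have : ∀ t, P t ^ 2 = ∑ i, x i t ^ 2 := fun t =>
            Real.sq_sqrt (Finset.sum_nonneg fun i _ => sq_nonneg _)
          simp_rw [this]
          rw [Finset.sum_comm]
          calc ∑ i : Fin m, ∑ t : ι, x i t ^ 2 ≤ ∑ _i : Fin m, (1:ℝ) :=
                Finset.sum_le_sum fun i _ => hx i
            _ = m := by simp
        have hQsum : ∑ t : ι, Q t ^ 2 ≤ (n : ℝ) := by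
          have : ∀ t, Q t ^ 2 = ∑ j, y j t ^ 2 := fun t =>
            Real.sq_sqrt (Finset.sum_nonneg fun j _ => sq_nonneg _)
          simp_rw [this]
          rw [Finset.sum_comm]
          calc ∑ j : Fin n, ∑ t : ι, y j t ^ 2 ≤ ∑ _j : Fin n, (1:ℝ) :=
                Finset.sum_le_sum fun j _ => hy j
            _ = n := by simp
        have hsum_nonneg : (0:ℝ) ≤ ∑ t : ι, P t * Q t :=
          Finset.sum_nonneg fun t _ => mul_nonneg (Real.sqrt_nonneg _) (Real.sqrt_nonneg _)
        have hsq : (∑ t : ι, P t * Q t) ^ 2 ≤ (m : ℝ) * n := by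
          calc (∑ t : ι, P t * Q t) ^ 2 ≤ (∑ t : ι, P t ^ 2) * ∑ t : ι, Q t ^ 2 := cs
            _ ≤ (m : ℝ) * n := by
                apply mul_le_mul hPsum hQsum (Finset.sum_nonneg fun t _ => sq_nonneg _)
                  (Nat.cast_nonneg _)
        calc ∑ t : ι, P t * Q t = Real.sqrt ((∑ t : ι, P t * Q t) ^ 2) :=
              (Real.sqrt_sq hsum_nonneg).symm
          _ ≤ Real.sqrt ((m:ℝ) * n) := Real.sqrt_le_sqrt hsq


open Finset

/-- truncation at level √48 -/
noncomputable def phi (z : ℝ) : ℝ := if |z| ≤ Real.sqrt 48 then z else 0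

lemma abs_phi_le (z : ℝ) : |phi z| ≤ Real.sqrt 48 := by
  unfold phi; split
  · assumption
  · simpa using Real.sqrt_nonneg 48

lemma phi_sq_le (z : ℝ) : phi z ^ 2 ≤ z ^ 2 := by
  unfold phi; split
  · exact le_rfl
  · simpa using sq_nonneg z

lemma rem_sq_le (z : ℝ) : (z - phi z) ^ 2 ≤ z ^ 4 / 48 := by
  unfold phi; split
  · simp; positivity
  · rename_i hz
    push_neg at hz
    have h48 : (48:ℝ) < z ^ 2 := by
      nlinarith [Real.mul_self_sqrt (show (0:ℝ) ≤ 48 by norm_num), Real.sqrt_nonneg 48,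
        abs_mul_abs_self z, abs_nonneg z, hz]
    rw [sub_zero, le_div_iff₀ (by norm_num : (0:ℝ) < 48)]
    nlinarith [sq_nonneg z, h48]

lemma gineq_step {m n : ℕ} {c : ℝ} (h : GIneq m n c) : GIneq m n (48 + c / 2) := by
  intro ι instF x y A hx hy hA
  classical
  set D : ℝ := (Fintype.card (ι → Bool) : ℝ) with hDdef
  have hD0 : (0:ℝ) < D := by
    rw [hDdef]; exact_mod_cast Fintype.card_pos
  have hsD : Real.sqrt D * Real.sqrt D = D := Real.mul_self_sqrt hD0.le
  have hsD0 : (0:ℝ) < Real.sqrt D := Real.sqrt_pos.2 hD0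
  set X : Fin m → (ι → Bool) → ℝ := fun i ω => Z Finset.univ (x i) ω with hXdef
  set Y : Fin n → (ι → Bool) → ℝ := fun j ω => Z Finset.univ (y j) ω with hYdef
  have hXX : ∀ i, ∑ ω : ι → Bool, X i ω ^ 2 = D * ∑ t, x i t ^ 2 := by
    intro i
    have h := sum_Z_mul_Z Finset.univ (x i) (x i)
    simp only [← pow_two] at h
    exact h
  have hYY : ∀ j, ∑ ω : ι → Bool, Y j ω ^ 2 = D * ∑ t, y j t ^ 2 := by
    intro j
    have h := sum_Z_mul_Z Finset.univ (y j) (y j)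
    simp only [← pow_two] at h
    exact h
  have hX4 : ∀ i, ∑ ω : ι → Bool, X i ω ^ 4 ≤ 3 * D * (∑ t, x i t ^ 2) ^ 2 :=
    fun i => sum_Z_pow_four_le Finset.univ (x i)
  have hY4 : ∀ j, ∑ ω : ι → Bool, Y j ω ^ 4 ≤ 3 * D * (∑ t, y j t ^ 2) ^ 2 :=
    fun j => sum_Z_pow_four_le Finset.univ (y j)
  have hs48 : Real.sqrt 48 * Real.sqrt 48 = 48 := Real.mul_self_sqrt (by norm_num)
  have hs48' : (0:ℝ) < Real.sqrt 48 := Real.sqrt_pos.2 (by norm_num)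
  -- splitting
  have hXY : ∀ i j, ∑ t, x i t * y j t
      = (1/D) * (∑ ω : ι → Bool, phi (X i ω) * phi (Y j ω))
        + ((1/D) * ∑ ω : ι → Bool, (X i ω - phi (X i ω)) * Y j ω)
        + ((1/D) * ∑ ω : ι → Bool, phi (X i ω) * (Y j ω - phi (Y j ω))) := by
    intro i j
    have h1 : ∑ t, x i t * y j t = (1/D) * ∑ ω : ι → Bool, X i ω * Y j ω := by
      rw [show (∑ ω : ι → Bool, X i ω * Y j ω)
          = D * ∑ t, x i t * y j t from sum_Z_mul_Z Finset.univ (x i) (y j),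
        one_div, inv_mul_cancel_left₀ hD0.ne']
    rw [h1]
    have h2 : ∑ ω : ι → Bool, X i ω * Y j ω
        = (∑ ω : ι → Bool, phi (X i ω) * phi (Y j ω))
          + (∑ ω : ι → Bool, (X i ω - phi (X i ω)) * Y j ω)
          + (∑ ω : ι → Bool, phi (X i ω) * (Y j ω - phi (Y j ω))) := by
      rw [← Finset.sum_add_distrib, ← Finset.sum_add_distrib]
      exact Finset.sum_congr rfl fun ω _ => by ring
    rw [h2]; ring
  have hsplit : ∑ i, ∑ j, A i j * (∑ t, x i t * y j t)
      = (1/D) * (∑ i, ∑ j, A i j * (∑ ω : ι → Bool, phi (X i ω) * phi (Y j ω)))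
        + (1/D) * (∑ i, ∑ j, A i j * (∑ ω : ι → Bool, (X i ω - phi (X i ω)) * Y j ω))
        + (1/D) * (∑ i, ∑ j, A i j * (∑ ω : ι → Bool, phi (X i ω) * (Y j ω - phi (Y j ω)))) := by
    simp_rw [hXY]
    rw [← pull_const A (1/D) (fun i j => ∑ ω : ι → Bool, phi (X i ω) * phi (Y j ω)),
      ← pull_const A (1/D) (fun i j => ∑ ω : ι → Bool, (X i ω - phi (X i ω)) * Y j ω),
      ← pull_const A (1/D) (fun i j => ∑ ω : ι → Bool, phi (X i ω) * (Y j ω - phi (Y j ω))),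
      ← Finset.sum_add_distrib, ← Finset.sum_add_distrib]
    refine Finset.sum_congr rfl fun i _ => ?_
    rw [← Finset.sum_add_distrib, ← Finset.sum_add_distrib]
    refine Finset.sum_congr rfl fun j _ => by ring
  -- bound 1
  have bound1 : |∑ i, ∑ j, A i j * (∑ ω : ι → Bool, phi (X i ω) * phi (Y j ω))| ≤ D * 48 := by
    have hswap : ∑ i, ∑ j, A i j * (∑ ω : ι → Bool, phi (X i ω) * phi (Y j ω))
        = ∑ ω : ι → Bool, ∑ i, ∑ j, A i j * (phi (X i ω) * phi (Y j ω)) := by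
      simp_rw [Finset.mul_sum]
      exact sum_swap3 _
    rw [hswap]
    calc |∑ ω : ι → Bool, ∑ i, ∑ j, A i j * (phi (X i ω) * phi (Y j ω))|
        ≤ ∑ ω : ι → Bool, |∑ i, ∑ j, A i j * (phi (X i ω) * phi (Y j ω))| :=
          Finset.abs_sum_le_sum_abs _ _
      _ ≤ ∑ _ω : ι → Bool, (48:ℝ) := by
          refine Finset.sum_le_sum fun ω _ => ?_
          have hu : ∀ i, |phi (X i ω) / Real.sqrt 48| ≤ 1 := fun i => by
            rw [abs_div, abs_of_pos hs48', div_le_one hs48']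
            exact abs_phi_le _
          have hv : ∀ j, |phi (Y j ω) / Real.sqrt 48| ≤ 1 := fun j => by
            rw [abs_div, abs_of_pos hs48', div_le_one hs48']
            exact abs_phi_le _
          have key := hA (fun i => phi (X i ω) / Real.sqrt 48)
            (fun j => phi (Y j ω) / Real.sqrt 48) hu hv
          have hrw : ∑ i, ∑ j, A i j * (phi (X i ω) * phi (Y j ω))
              = 48 * ∑ i, ∑ j, A i j
                  * (phi (X i ω) / Real.sqrt 48 * (phi (Y j ω) / Real.sqrt 48)) := by
            rw [← pull_const]
            refine Finset.sum_congr rfl fun i _ => Finset.sum_congr rfl fun j _ => ?_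
            rw [div_mul_div_comm, hs48]
            field_simp
          rw [hrw, abs_mul, abs_of_pos (by norm_num : (0:ℝ) < 48)]
          calc (48:ℝ) * |∑ i, ∑ j, A i j
                  * (phi (X i ω) / Real.sqrt 48 * (phi (Y j ω) / Real.sqrt 48))|
              ≤ 48 * 1 := by exact mul_le_mul_of_nonneg_left key (by norm_num)
            _ = 48 := mul_one _
      _ = D * 48 := by rw [Finset.sum_const, Finset.card_univ, nsmul_eq_mul]
  -- bound 2
  have bound2 : |∑ i, ∑ j, A i j * (∑ ω : ι → Bool, (X i ω - phi (X i ω)) * Y j ω)|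
      ≤ D * (c / 4) := by
    set x' : Fin m → (ι → Bool) → ℝ :=
      fun i ω => 4 * (X i ω - phi (X i ω)) / Real.sqrt D with hx'def
    set y' : Fin n → (ι → Bool) → ℝ := fun j ω => Y j ω / Real.sqrt D with hy'def
    have hx' : ∀ i, ∑ ω : ι → Bool, x' i ω ^ 2 ≤ 1 := by
      intro i
      have hpt : ∀ ω : ι → Bool, x' i ω ^ 2 = 16 * (X i ω - phi (X i ω)) ^ 2 / D := by
        intro ω
        rw [hx'def, div_pow, mul_pow, Real.sq_sqrt hD0.le]
        ring
      simp_rw [hpt]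
      have h1 : ∑ ω : ι → Bool, (X i ω - phi (X i ω)) ^ 2 ≤ D / 16 := by
        calc ∑ ω : ι → Bool, (X i ω - phi (X i ω)) ^ 2
            ≤ ∑ ω : ι → Bool, X i ω ^ 4 / 48 :=
              Finset.sum_le_sum fun ω _ => rem_sq_le _
          _ = (∑ ω : ι → Bool, X i ω ^ 4) / 48 := by rw [Finset.sum_div]
          _ ≤ 3 * D * (∑ t, x i t ^ 2) ^ 2 / 48 := by
              apply div_le_div_of_nonneg_right ?_ (by norm_num)
              · exact hX4 i
          _ ≤ 3 * D * 1 / 48 := by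
              apply div_le_div_of_nonneg_right ?_ (by norm_num)
              have h2 : (∑ t, x i t ^ 2) ^ 2 ≤ 1 := by
                have := hx i
                have hnn : (0:ℝ) ≤ ∑ t, x i t ^ 2 := Finset.sum_nonneg fun t _ => sq_nonneg _
                nlinarith
              nlinarith
          _ ≤ D / 16 := by nlinarith
      calc ∑ ω : ι → Bool, 16 * (X i ω - phi (X i ω)) ^ 2 / D
          = 16 / D * ∑ ω : ι → Bool, (X i ω - phi (X i ω)) ^ 2 := by
            rw [Finset.mul_sum]
            exact Finset.sum_congr rfl fun ω _ => by ring
        _ ≤ 16 / D * (D / 16) := by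
            apply mul_le_mul_of_nonneg_left h1 (by positivity)
        _ = 1 := by field_simp
    have hy' : ∀ j, ∑ ω : ι → Bool, y' j ω ^ 2 ≤ 1 := by
      intro j
      have hpt : ∀ ω : ι → Bool, y' j ω ^ 2 = Y j ω ^ 2 / D := by
        intro ω
        rw [hy'def, div_pow, Real.sq_sqrt hD0.le]
      simp_rw [hpt]
      rw [← Finset.sum_div, hYY j]
      rw [mul_comm, mul_div_assoc, div_self hD0.ne', mul_one]
      exact hy j
    have key := h (ι → Bool) x' y' A hx' hy' hA
    have hrw : ∀ i j, ∑ ω : ι → Bool, x' i ω * y' j ω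
        = (4 / D) * ∑ ω : ι → Bool, (X i ω - phi (X i ω)) * Y j ω := by
      intro i j
      rw [Finset.mul_sum]
      refine Finset.sum_congr rfl fun ω _ => ?_
      rw [hx'def, hy'def, div_mul_div_comm, hsD]
      ring
    simp_rw [hrw] at key
    rw [pull_const] at key
    rw [abs_mul, abs_of_pos (by positivity : (0:ℝ) < 4 / D), div_mul_eq_mul_div,
      div_le_iff₀ hD0] at key
    linarith [key]
  -- bound 3
  have bound3 : |∑ i, ∑ j, A i j * (∑ ω : ι → Bool, phi (X i ω) * (Y j ω - phi (Y j ω)))|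
      ≤ D * (c / 4) := by
    set x' : Fin m → (ι → Bool) → ℝ := fun i ω => phi (X i ω) / Real.sqrt D with hx'def
    set y' : Fin n → (ι → Bool) → ℝ :=
      fun j ω => 4 * (Y j ω - phi (Y j ω)) / Real.sqrt D with hy'def
    have hx' : ∀ i, ∑ ω : ι → Bool, x' i ω ^ 2 ≤ 1 := by
      intro i
      have hpt : ∀ ω : ι → Bool, x' i ω ^ 2 = phi (X i ω) ^ 2 / D := by
        intro ω
        rw [hx'def, div_pow, Real.sq_sqrt hD0.le]
      simp_rw [hpt]
      rw [← Finset.sum_div, div_le_one hD0]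
      calc ∑ ω : ι → Bool, phi (X i ω) ^ 2 ≤ ∑ ω : ι → Bool, X i ω ^ 2 :=
            Finset.sum_le_sum fun ω _ => phi_sq_le _
        _ = D * ∑ t, x i t ^ 2 := hXX i
        _ ≤ D * 1 := mul_le_mul_of_nonneg_left (hx i) hD0.le
        _ = D := mul_one _
    have hy' : ∀ j, ∑ ω : ι → Bool, y' j ω ^ 2 ≤ 1 := by
      intro j
      have hpt : ∀ ω : ι → Bool, y' j ω ^ 2 = 16 * (Y j ω - phi (Y j ω)) ^ 2 / D := by
        intro ω
        rw [hy'def, div_pow, mul_pow, Real.sq_sqrt hD0.le]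
        ring
      simp_rw [hpt]
      have h1 : ∑ ω : ι → Bool, (Y j ω - phi (Y j ω)) ^ 2 ≤ D / 16 := by
        calc ∑ ω : ι → Bool, (Y j ω - phi (Y j ω)) ^ 2
            ≤ ∑ ω : ι → Bool, Y j ω ^ 4 / 48 :=
              Finset.sum_le_sum fun ω _ => rem_sq_le _
          _ = (∑ ω : ι → Bool, Y j ω ^ 4) / 48 := by rw [Finset.sum_div]
          _ ≤ 3 * D * (∑ t, y j t ^ 2) ^ 2 / 48 := by
              apply div_le_div_of_nonneg_right ?_ (by norm_num)
              · exact hY4 j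
          _ ≤ 3 * D * 1 / 48 := by
              apply div_le_div_of_nonneg_right ?_ (by norm_num)
              have h2 : (∑ t, y j t ^ 2) ^ 2 ≤ 1 := by
                have := hy j
                have hnn : (0:ℝ) ≤ ∑ t, y j t ^ 2 := Finset.sum_nonneg fun t _ => sq_nonneg _
                nlinarith
              nlinarith
          _ ≤ D / 16 := by nlinarith
      calc ∑ ω : ι → Bool, 16 * (Y j ω - phi (Y j ω)) ^ 2 / D
          = 16 / D * ∑ ω : ι → Bool, (Y j ω - phi (Y j ω)) ^ 2 := by
            rw [Finset.mul_sum]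
            exact Finset.sum_congr rfl fun ω _ => by ring
        _ ≤ 16 / D * (D / 16) := by
            apply mul_le_mul_of_nonneg_left h1 (by positivity)
        _ = 1 := by field_simp
    have key := h (ι → Bool) x' y' A hx' hy' hA
    have hrw : ∀ i j, ∑ ω : ι → Bool, x' i ω * y' j ω
        = (4 / D) * ∑ ω : ι → Bool, phi (X i ω) * (Y j ω - phi (Y j ω)) := by
      intro i j
      rw [Finset.mul_sum]
      refine Finset.sum_congr rfl fun ω _ => ?_
      rw [hx'def, hy'def, div_mul_div_comm, hsD]
      ring
    simp_rw [hrw] at key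
    rw [pull_const] at key
    rw [abs_mul, abs_of_pos (by positivity : (0:ℝ) < 4 / D), div_mul_eq_mul_div,
      div_le_iff₀ hD0] at key
    linarith [key]
  -- combine
  rw [hsplit]
  have e1 : |(1/D) * (∑ i, ∑ j, A i j * (∑ ω : ι → Bool, phi (X i ω) * phi (Y j ω)))| ≤ 48 := by
    rw [abs_mul, abs_of_pos (by positivity : (0:ℝ) < 1/D)]
    calc (1/D) * |∑ i, ∑ j, A i j * (∑ ω : ι → Bool, phi (X i ω) * phi (Y j ω))|
        ≤ (1/D) * (D * 48) := mul_le_mul_of_nonneg_left bound1 (by positivity)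
      _ = 48 := by field_simp
  have e2 : |(1/D) * (∑ i, ∑ j, A i j * (∑ ω : ι → Bool, (X i ω - phi (X i ω)) * Y j ω))|
      ≤ c / 4 := by
    rw [abs_mul, abs_of_pos (by positivity : (0:ℝ) < 1/D)]
    calc (1/D) * |∑ i, ∑ j, A i j * (∑ ω : ι → Bool, (X i ω - phi (X i ω)) * Y j ω)|
        ≤ (1/D) * (D * (c/4)) := mul_le_mul_of_nonneg_left bound2 (by positivity)
      _ = c / 4 := by field_simp
  have e3 : |(1/D) * (∑ i, ∑ j, A i j * (∑ ω : ι → Bool, phi (X i ω) * (Y j ω - phi (Y j ω))))|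
      ≤ c / 4 := by
    rw [abs_mul, abs_of_pos (by positivity : (0:ℝ) < 1/D)]
    calc (1/D) * |∑ i, ∑ j, A i j * (∑ ω : ι → Bool, phi (X i ω) * (Y j ω - phi (Y j ω)))|
        ≤ (1/D) * (D * (c/4)) := mul_le_mul_of_nonneg_left bound3 (by positivity)
      _ = c / 4 := by field_simp
  calc |(1/D) * (∑ i, ∑ j, A i j * (∑ ω : ι → Bool, phi (X i ω) * phi (Y j ω)))
        + (1/D) * (∑ i, ∑ j, A i j * (∑ ω : ι → Bool, (X i ω - phi (X i ω)) * Y j ω))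
        + (1/D) * (∑ i, ∑ j, A i j * (∑ ω : ι → Bool, phi (X i ω) * (Y j ω - phi (Y j ω))))|
      ≤ |(1/D) * (∑ i, ∑ j, A i j * (∑ ω : ι → Bool, phi (X i ω) * phi (Y j ω)))
          + (1/D) * (∑ i, ∑ j, A i j * (∑ ω : ι → Bool, (X i ω - phi (X i ω)) * Y j ω))|
        + |(1/D) * (∑ i, ∑ j, A i j
            * (∑ ω : ι → Bool, phi (X i ω) * (Y j ω - phi (Y j ω))))| := abs_add_le _ _
    _ ≤ |(1/D) * (∑ i, ∑ j, A i j * (∑ ω : ι → Bool, phi (X i ω) * phi (Y j ω)))|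
        + |(1/D) * (∑ i, ∑ j, A i j * (∑ ω : ι → Bool, (X i ω - phi (X i ω)) * Y j ω))|
        + |(1/D) * (∑ i, ∑ j, A i j
            * (∑ ω : ι → Bool, phi (X i ω) * (Y j ω - phi (Y j ω))))| := by
          have := abs_add_le ((1/D) * (∑ i, ∑ j, A i j
              * (∑ ω : ι → Bool, phi (X i ω) * phi (Y j ω))))
            ((1/D) * (∑ i, ∑ j, A i j * (∑ ω : ι → Bool, (X i ω - phi (X i ω)) * Y j ω)))
          linarith [abs_nonneg ((1/D) * (∑ i, ∑ j, A i j
            * (∑ ω : ι → Bool, phi (X i ω) * (Y j ω - phi (Y j ω)))))]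
    _ ≤ 48 + c/4 + c/4 := by linarith [e1, e2, e3]
    _ = 48 + c / 2 := by ring

theorem gineq_main (m n : ℕ) : GIneq m n 96 := by
  have hiter : ∀ k : ℕ, GIneq m n (96 + Real.sqrt (m * n) / 2 ^ k) := by
    intro k
    induction k with
    | zero =>
      refine GIneq.mono ?_ (gineq_base m n)
      have : (0:ℝ) ≤ Real.sqrt (m*n) := Real.sqrt_nonneg _
      simp only [pow_zero, div_one]
      linarith
    | succ k ih =>
      have hstep := gineq_step ih
      refine GIneq.mono (le_of_eq ?_) hstep
      rw [pow_succ]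
      field_simp
      ring
  intro ι _ x y A hx hy hA
  refine le_of_forall_pos_le_add ?_
  intro ε hε
  obtain ⟨k, hk⟩ := pow_unbounded_of_one_lt (Real.sqrt (m * n) / ε) (one_lt_two (α := ℝ))
  have hb := hiter k ι x y A hx hy hA
  have hlt : Real.sqrt (m * n) / 2 ^ k < ε := by
    rw [div_lt_iff₀ (by positivity : (0:ℝ) < 2 ^ k)]
    have := (div_lt_iff₀ hε).1 hk
    linarith
  linarith




variable {𝕜 : Type*} [RCLike 𝕜]

lemma lpNorm_one {n : ℕ} (z : Fin n → 𝕜) : lpNorm 1 z = ∑ i, ‖z i‖ := by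
  unfold lpNorm
  rw [if_neg (by simp : (1:ℝ≥0∞) ≠ ∞)]
  simp [Real.rpow_one]

lemma lpNorm_two {n : ℕ} (z : Fin n → 𝕜) : lpNorm 2 z = Real.sqrt (∑ i, ‖z i‖ ^ 2) := by
  unfold lpNorm
  rw [if_neg (by simp : (2:ℝ≥0∞) ≠ ∞), show ((2:ℝ≥0∞).toReal) = 2 from by norm_num,
    Real.sqrt_eq_rpow]
  congr 1
  refine Finset.sum_congr rfl fun i _ => ?_
  rw [← Real.rpow_natCast (‖z i‖) 2]
  norm_num

lemma lpNorm_inf {n : ℕ} (z : Fin n → 𝕜) : lpNorm ∞ z = ⨆ i, ‖z i‖ := by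
  unfold lpNorm
  rw [if_pos rfl]

lemma lpNorm_nonneg (p : ℝ≥0∞) {n : ℕ} (z : Fin n → 𝕜) : 0 ≤ lpNorm p z := by
  unfold lpNorm
  split
  · exact Real.iSup_nonneg fun i => norm_nonneg _
  · exact Real.rpow_nonneg (Finset.sum_nonneg fun i _ => Real.rpow_nonneg (norm_nonneg _) _) _

lemma lpNorm_one_pos {n : ℕ} {z : Fin n → 𝕜} (hz : z ≠ 0) : 0 < lpNorm 1 z := by
  rw [lpNorm_one]
  obtain ⟨i, hi⟩ : ∃ i, z i ≠ 0 := by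
    by_contra hc
    push_neg at hc
    exact hz (funext hc)
  calc (0:ℝ) < ‖z i‖ := norm_pos_iff.2 hi
    _ ≤ ∑ i, ‖z i‖ := Finset.single_le_sum (fun i _ => norm_nonneg _) (Finset.mem_univ i)

lemma lpNorm_two_pos {n : ℕ} {z : Fin n → 𝕜} (hz : z ≠ 0) : 0 < lpNorm 2 z := by
  rw [lpNorm_two]
  obtain ⟨i, hi⟩ : ∃ i, z i ≠ 0 := by
    by_contra hc
    push_neg at hc
    exact hz (funext hc)
  apply Real.sqrt_pos.2
  calc (0:ℝ) < ‖z i‖ ^ 2 := pow_pos (norm_pos_iff.2 hi) 2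
    _ ≤ ∑ i, ‖z i‖ ^ 2 := Finset.single_le_sum (f := fun i => ‖z i‖ ^ 2)
        (fun i _ => sq_nonneg _) (Finset.mem_univ i)

lemma lpNorm_inf_pos {n : ℕ} {z : Fin n → 𝕜} (hz : z ≠ 0) : 0 < lpNorm ∞ z := by
  rw [lpNorm_inf]
  obtain ⟨i, hi⟩ : ∃ i, z i ≠ 0 := by
    by_contra hc
    push_neg at hc
    exact hz (funext hc)
  calc (0:ℝ) < ‖z i‖ := norm_pos_iff.2 hi
    _ ≤ ⨆ i, ‖z i‖ := le_ciSup (f := fun i => ‖z i‖)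
        (Set.Finite.bddAbove (Set.finite_range _)) i

lemma le_lpNorm_inf {n : ℕ} (z : Fin n → 𝕜) (i : Fin n) : ‖z i‖ ≤ lpNorm ∞ z := by
  rw [lpNorm_inf]
  exact le_ciSup (f := fun i => ‖z i‖) (Set.Finite.bddAbove (Set.finite_range _)) i

lemma lpNorm_inf_le {n : ℕ} (z : Fin n → 𝕜) (B : ℝ) (hB : 0 ≤ B) (h : ∀ i, ‖z i‖ ≤ B) :
    lpNorm ∞ z ≤ B := by
  rw [lpNorm_inf]
  exact Real.iSup_le h hB

lemma ratio_le_opNorm {p q : ℝ≥0∞} {m' n' : ℕ} (A : Matrix (Fin m') (Fin n') 𝕜) (B : ℝ)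
    (hB : ∀ z : Fin n' → 𝕜, z ≠ 0 → lpNorm q (A.mulVec z) / lpNorm p z ≤ B)
    (z₀ : Fin n' → 𝕜) (hz₀ : z₀ ≠ 0) :
    lpNorm q (A.mulVec z₀) / lpNorm p z₀ ≤ opNorm p q A := by
  apply le_ciSup (f := fun z : {z : Fin n' → 𝕜 // z ≠ 0} =>
    lpNorm q (A.mulVec z.1) / lpNorm p z.1) ?_ (⟨z₀, hz₀⟩ : {z : Fin n' → 𝕜 // z ≠ 0})
  refine ⟨B, ?_⟩
  rintro r ⟨z, rfl⟩
  exact hB z.1 z.2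

/-- Cauchy–Schwarz for the bilinear pairing -/
lemma norm_sum_mul_le {L : ℕ} (f g : Fin L → 𝕜) :
    ‖∑ t, f t * g t‖ ≤ Real.sqrt (∑ t, ‖f t‖ ^ 2) * Real.sqrt (∑ t, ‖g t‖ ^ 2) := by
  calc ‖∑ t, f t * g t‖ ≤ ∑ t, ‖f t * g t‖ := norm_sum_le _ _
    _ = ∑ t, ‖f t‖ * ‖g t‖ := Finset.sum_congr rfl fun t _ => norm_mul _ _
    _ ≤ Real.sqrt (∑ t, ‖f t‖ ^ 2) * Real.sqrt (∑ t, ‖g t‖ ^ 2) := by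
        have h1 : (∑ t, ‖f t‖ * ‖g t‖) ^ 2 ≤ (∑ t, ‖f t‖ ^ 2) * ∑ t, ‖g t‖ ^ 2 :=
          Finset.sum_mul_sq_le_sq_mul_sq _ _ _
        have h2 : (0:ℝ) ≤ ∑ t, ‖f t‖ * ‖g t‖ :=
          Finset.sum_nonneg fun t _ => mul_nonneg (norm_nonneg _) (norm_nonneg _)
        calc ∑ t, ‖f t‖ * ‖g t‖ = Real.sqrt ((∑ t, ‖f t‖ * ‖g t‖) ^ 2) :=
              (Real.sqrt_sq h2).symm
          _ ≤ Real.sqrt ((∑ t, ‖f t‖ ^ 2) * ∑ t, ‖g t‖ ^ 2) := Real.sqrt_le_sqrt h1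
          _ = _ := Real.sqrt_mul (Finset.sum_nonneg fun t _ => sq_nonneg _) _


lemma single_ne_zero' {n : ℕ} (j : Fin n) : (Pi.single j 1 : Fin n → 𝕜) ≠ 0 := by
  intro h
  have := congrFun h j
  simp at this

/-- columns are dominated by the (1,2) operator norm -/
lemma col_le_opNorm {l m : ℕ} (X : Matrix (Fin l) (Fin m) 𝕜) (j : Fin m) :
    Real.sqrt (∑ t, ‖X t j‖ ^ 2) ≤ opNorm 1 2 X := by
  classical
  set colN : Fin m → ℝ := fun j' => Real.sqrt (∑ t, ‖X t j'‖ ^ 2) with hcol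
  have hcoln : ∀ j', 0 ≤ colN j' := fun j' => Real.sqrt_nonneg _
  set T := (EuclideanSpace.equiv (Fin l) 𝕜).symm with hT
  have hrep : ∀ v : Fin l → 𝕜, lpNorm 2 v = ‖T v‖ := by
    intro v
    rw [lpNorm_two, EuclideanSpace.norm_eq]
    rfl
  have hnum : ∀ z : Fin m → 𝕜, lpNorm 2 (X.mulVec z) ≤ ∑ j', ‖z j'‖ * colN j' := by
    intro z
    have hdec : X.mulVec z = ∑ j', z j' • (fun t => X t j') := by
      funext t
      rw [Finset.sum_apply]
      simp only [Pi.smul_apply, smul_eq_mul]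
      rw [Matrix.mulVec, dotProduct]
      exact Finset.sum_congr rfl fun j' _ => mul_comm _ _
    rw [hrep, hdec, map_sum]
    calc ‖∑ j', T (z j' • fun t => X t j')‖ ≤ ∑ j', ‖T (z j' • fun t => X t j')‖ :=
          norm_sum_le _ _
      _ = ∑ j', ‖z j'‖ * colN j' := by
          refine Finset.sum_congr rfl fun j' _ => ?_
          rw [_root_.map_smul, norm_smul]
          congr 1
          rw [← hrep, lpNorm_two]
  have hB : ∀ z : Fin m → 𝕜, z ≠ 0 →
      lpNorm 2 (X.mulVec z) / lpNorm 1 z ≤ ∑ j', colN j' := by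
    intro z hz
    rw [div_le_iff₀ (lpNorm_one_pos hz)]
    calc lpNorm 2 (X.mulVec z) ≤ ∑ j', ‖z j'‖ * colN j' := hnum z
      _ ≤ ∑ j', colN j' * lpNorm 1 z := by
          refine Finset.sum_le_sum fun j' _ => ?_
          rw [mul_comm]
          apply mul_le_mul_of_nonneg_left ?_ (hcoln j')
          rw [lpNorm_one]
          exact Finset.single_le_sum (f := fun i => ‖z i‖) (fun i _ => norm_nonneg _)
            (Finset.mem_univ j')
      _ = (∑ j', colN j') * lpNorm 1 z := by rw [Finset.sum_mul]
  have hr := ratio_le_opNorm (p := 1) (q := 2) X (∑ j', colN j') hB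
    (Pi.single j 1) (single_ne_zero' j)
  have h1 : lpNorm 1 (Pi.single j 1 : Fin m → 𝕜) = 1 := by
    rw [lpNorm_one]
    calc ∑ i, ‖(Pi.single j 1 : Fin m → 𝕜) i‖ = ∑ i, if i = j then 1 else 0 := by
          refine Finset.sum_congr rfl fun i _ => ?_
          rcases eq_or_ne i j with h | h
          · subst h; simp
          · simp [h, Pi.single_eq_of_ne h]
      _ = 1 := by simp
  have h2 : X.mulVec (Pi.single j 1) = fun t => X t j := by
    funext t
    rw [Matrix.mulVec_single]
    simp
  rw [h1, h2, div_one, lpNorm_two] at hr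
  exact hr

/-- rows are dominated by the (2,∞) operator norm -/
lemma row_le_opNorm {n l : ℕ} (Y : Matrix (Fin n) (Fin l) 𝕜) (hl : 0 < l) (k : Fin n) :
    Real.sqrt (∑ t, ‖Y k t‖ ^ 2) ≤ opNorm 2 ∞ Y := by
  classical
  set rowN : Fin n → ℝ := fun k' => Real.sqrt (∑ t, ‖Y k' t‖ ^ 2) with hrowN
  have hrn : ∀ k', 0 ≤ rowN k' := fun k' => Real.sqrt_nonneg _
  set B : ℝ := ∑ k', rowN k' with hBdef
  have hB0 : 0 ≤ B := Finset.sum_nonneg fun k' _ => hrn k'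
  have happly : ∀ (z : Fin l → 𝕜) (k' : Fin n), Y.mulVec z k' = ∑ t, Y k' t * z t := by
    intro z k'
    rw [Matrix.mulVec, dotProduct]
  have hB : ∀ z : Fin l → 𝕜, z ≠ 0 → lpNorm ∞ (Y.mulVec z) / lpNorm 2 z ≤ B := by
    intro z hz
    rw [div_le_iff₀ (lpNorm_two_pos hz)]
    apply lpNorm_inf_le _ _ (mul_nonneg hB0 (lpNorm_nonneg _ _))
    intro k'
    rw [happly]
    calc ‖∑ t, Y k' t * z t‖
        ≤ Real.sqrt (∑ t, ‖Y k' t‖ ^ 2) * Real.sqrt (∑ t, ‖z t‖ ^ 2) :=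
          norm_sum_mul_le _ _
      _ = rowN k' * lpNorm 2 z := by rw [lpNorm_two]
      _ ≤ B * lpNorm 2 z := by
          apply mul_le_mul_of_nonneg_right ?_ (lpNorm_nonneg _ _)
          exact Finset.single_le_sum (f := rowN) (fun k' _ => hrn k') (Finset.mem_univ k')
  by_cases hrow : (fun t => Y k t) = 0
  · have hz : rowN k = 0 := by
      have : ∀ t, Y k t = 0 := fun t => congrFun hrow t
      simp [hrowN, this]
    rw [show Real.sqrt (∑ t, ‖Y k t‖ ^ 2) = rowN k from rfl, hz]
    have h := ratio_le_opNorm (p := 2) (q := ∞) Y B hB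
      (Pi.single ⟨0, hl⟩ 1) (single_ne_zero' _)
    exact le_trans (div_nonneg (lpNorm_nonneg _ _) (lpNorm_nonneg _ _)) h
  · set z₀ : Fin l → 𝕜 := fun t => (starRingEnd 𝕜) (Y k t) with hz₀def
    obtain ⟨t₀, ht₀⟩ : ∃ t, Y k t ≠ 0 := by
      by_contra hc
      push_neg at hc
      exact hrow (funext hc)
    have hz₀ : z₀ ≠ 0 := by
      intro h
      have := congrFun h t₀
      rw [hz₀def] at this
      simp only [Pi.zero_apply] at this
      exact ht₀ (by simpa [star_eq_zero] using this)
    have hlp2 : lpNorm 2 z₀ = rowN k := by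
      rw [lpNorm_two, hrowN]
      simp [hz₀def]
    have hrk : 0 < rowN k := by
      apply Real.sqrt_pos.2
      calc (0:ℝ) < ‖Y k t₀‖ ^ 2 := pow_pos (norm_pos_iff.2 ht₀) 2
        _ ≤ ∑ t, ‖Y k t‖ ^ 2 := Finset.single_le_sum (f := fun t => ‖Y k t‖ ^ 2)
            (fun t _ => sq_nonneg _) (Finset.mem_univ t₀)
    have hcomp : ‖Y.mulVec z₀ k‖ = rowN k ^ 2 := by
      rw [happly]
      have hterm : ∀ t : Fin l, Y k t * z₀ t = ((‖Y k t‖ ^ 2 : ℝ) : 𝕜) := by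
        intro t
        rw [hz₀def]
        exact_mod_cast RCLike.mul_conj (Y k t)
      rw [Finset.sum_congr rfl fun t _ => hterm t, ← RCLike.ofReal_sum]
      rw [RCLike.norm_ofReal, abs_of_nonneg (Finset.sum_nonneg fun t _ => sq_nonneg _)]
      rw [hrowN]
      simp only
      rw [Real.sq_sqrt (Finset.sum_nonneg fun t _ => sq_nonneg _)]
    have hratio := ratio_le_opNorm (p := 2) (q := ∞) Y B hB z₀ hz₀
    refine le_trans ?_ hratio
    rw [hlp2, le_div_iff₀ hrk]
    calc rowN k * rowN k = ‖Y.mulVec z₀ k‖ := by rw [hcomp]; ring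
      _ ≤ lpNorm ∞ (Y.mulVec z₀) := le_lpNorm_inf _ _

/-- bilinear forms with unit entries are dominated by the (∞,1) operator norm -/
lemma bilin_le_opNorm {m n : ℕ} (M : Matrix (Fin m) (Fin n) 𝕜) (hn : 0 < n)
    (u : Fin m → 𝕜) (v : Fin n → 𝕜) (hu : ∀ j, ‖u j‖ ≤ 1) (hv : ∀ k, ‖v k‖ ≤ 1) :
    ‖∑ j, ∑ k, u j * M j k * v k‖ ≤ opNorm ∞ 1 M := by
  classical
  set B : ℝ := ∑ j, ∑ k, ‖M j k‖ with hBdef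
  have hB0 : 0 ≤ B :=
    Finset.sum_nonneg fun j _ => Finset.sum_nonneg fun k _ => norm_nonneg _
  have happly : ∀ (z : Fin n → 𝕜) (j : Fin m), M.mulVec z j = ∑ k, M j k * z k := by
    intro z j
    rw [Matrix.mulVec, dotProduct]
  have hB : ∀ z : Fin n → 𝕜, z ≠ 0 → lpNorm 1 (M.mulVec z) / lpNorm ∞ z ≤ B := by
    intro z hz
    rw [div_le_iff₀ (lpNorm_inf_pos hz)]
    rw [lpNorm_one, Finset.sum_mul]
    refine Finset.sum_le_sum fun j _ => ?_
    rw [happly]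
    calc ‖∑ k, M j k * z k‖ ≤ ∑ k, ‖M j k * z k‖ := norm_sum_le _ _
      _ = ∑ k, ‖M j k‖ * ‖z k‖ := Finset.sum_congr rfl fun k _ => norm_mul _ _
      _ ≤ ∑ k, ‖M j k‖ * lpNorm ∞ z := Finset.sum_le_sum fun k _ =>
          mul_le_mul_of_nonneg_left (le_lpNorm_inf z k) (norm_nonneg _)
      _ = (∑ k, ‖M j k‖) * lpNorm ∞ z := by rw [Finset.sum_mul]
  have hC0 : 0 ≤ opNorm ∞ 1 M := by
    have h := ratio_le_opNorm (p := ∞) (q := 1) M B hB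
      (Pi.single ⟨0, hn⟩ 1) (single_ne_zero' _)
    exact le_trans (div_nonneg (lpNorm_nonneg _ _) (lpNorm_nonneg _ _)) h
  by_cases hvz : v = 0
  · have : ∑ j, ∑ k, u j * M j k * v k = 0 := by
      apply Finset.sum_eq_zero
      intro j _
      apply Finset.sum_eq_zero
      intro k _
      simp [hvz]
    rw [this, norm_zero]
    exact hC0
  · have hratio := ratio_le_opNorm (p := ∞) (q := 1) M B hB v hvz
    have hinfv : lpNorm ∞ v ≤ 1 := lpNorm_inf_le v 1 zero_le_one hv
    have h1 : lpNorm 1 (M.mulVec v) ≤ opNorm ∞ 1 M := by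
      rw [div_le_iff₀ (lpNorm_inf_pos hvz)] at hratio
      calc lpNorm 1 (M.mulVec v) ≤ opNorm ∞ 1 M * lpNorm ∞ v := hratio
        _ ≤ opNorm ∞ 1 M * 1 := mul_le_mul_of_nonneg_left hinfv hC0
        _ = opNorm ∞ 1 M := mul_one _
    calc ‖∑ j, ∑ k, u j * M j k * v k‖ ≤ ∑ j, ‖∑ k, u j * M j k * v k‖ := norm_sum_le _ _
      _ ≤ ∑ j, ‖M.mulVec v j‖ := by
          refine Finset.sum_le_sum fun j _ => ?_
          rw [happly]
          have : ∑ k, u j * M j k * v k = u j * ∑ k, M j k * v k := by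
            rw [Finset.mul_sum]
            exact Finset.sum_congr rfl fun k _ => by ring
          rw [this, norm_mul]
          calc ‖u j‖ * ‖∑ k, M j k * v k‖ ≤ 1 * ‖∑ k, M j k * v k‖ :=
                mul_le_mul_of_nonneg_right (hu j) (norm_nonneg _)
            _ = ‖∑ k, M j k * v k‖ := one_mul _
      _ = lpNorm 1 (M.mulVec v) := by rw [lpNorm_one]
      _ ≤ opNorm ∞ 1 M := h1


lemma sum_comm3 {M₀ : Type*} [AddCommMonoid M₀] {α β γ : Type*} [Fintype α] [Fintype β]
    [Fintype γ] (f : α → β → γ → M₀) :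
    ∑ a, ∑ b, ∑ c, f a b c = ∑ c, ∑ b, ∑ a, f a b c := by
  have h1 : ∀ a, ∑ b, ∑ c, f a b c = ∑ c, ∑ b, f a b c := fun a => Finset.sum_comm
  simp_rw [h1]
  rw [Finset.sum_comm]
  exact Finset.sum_congr rfl fun c _ => Finset.sum_comm

lemma dim_pos_of_ne_zero {a b : ℕ} (A : Matrix (Fin a) (Fin b) 𝕜) (hA : A ≠ 0) :
    0 < a ∧ 0 < b := by
  constructor
  · refine Nat.pos_of_ne_zero ?_
    rintro rfl
    exact hA (by ext i j; exact i.elim0)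
  · refine Nat.pos_of_ne_zero ?_
    rintro rfl
    exact hA (by ext i j; exact j.elim0)

lemma norm_le_re_add_im (z : 𝕜) : ‖z‖ ≤ |RCLike.re z| + |RCLike.im z| := by
  have h : ‖z‖ ^ 2 = RCLike.re z * RCLike.re z + RCLike.im z * RCLike.im z :=
    RCLike.norm_sq_eq_def
  nlinarith [abs_nonneg (RCLike.re z), abs_nonneg (RCLike.im z), norm_nonneg z,
    sq_abs (RCLike.re z), sq_abs (RCLike.im z), abs_mul_abs_self (RCLike.re z),
    abs_mul_abs_self (RCLike.im z)]


end Groth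

open Groth in
/-- Grothendieck's inequality in norm form: there is a finite constant `K` such that
`|tr(XMY)| ≤ K ‖X‖_{1,2} ‖Y‖_{2,∞} ‖M‖_{∞,1}` for all dimensions and all nonzero matrices. -/
theorem stmt10 (𝕜 : Type*) [RCLike 𝕜] :
    ∃ K : ℝ, ∀ (l m n : ℕ) (X : Matrix (Fin l) (Fin m) 𝕜) (M : Matrix (Fin m) (Fin n) 𝕜)
        (Y : Matrix (Fin n) (Fin l) 𝕜), X ≠ 0 → M ≠ 0 → Y ≠ 0 →
      ‖(X * M * Y).trace‖ ≤ K * (opNorm 1 2 X * opNorm 2 ∞ Y * opNorm ∞ 1 M) := by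
  refine ⟨384, ?_⟩
  intro l m n X M Y hX hM hY
  classical
  obtain ⟨hl, hm⟩ := dim_pos_of_ne_zero X hX
  obtain ⟨hm', hn⟩ := dim_pos_of_ne_zero M hM
  set a := opNorm 1 2 X with hadef
  set b := opNorm 2 ∞ Y with hbdef
  set C := opNorm ∞ 1 M with hCdef
  have hcol : ∀ j, Real.sqrt (∑ t, ‖X t j‖ ^ 2) ≤ a := col_le_opNorm X
  have hrowf : ∀ k, Real.sqrt (∑ t, ‖Y k t‖ ^ 2) ≤ b := row_le_opNorm Y hl
  have hbil : ∀ (u : Fin m → 𝕜) (v : Fin n → 𝕜), (∀ j, ‖u j‖ ≤ 1) → (∀ k, ‖v k‖ ≤ 1) →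
      ‖∑ j, ∑ k, u j * M j k * v k‖ ≤ C := fun u v hu hv => bilin_le_opNorm M hn u v hu hv
  -- positivity of the three norms
  have hentry : ∀ {p q : ℕ} (A : Matrix (Fin p) (Fin q) 𝕜), A ≠ 0 → ∃ i j, A i j ≠ 0 := by
    intro p q A hA
    by_contra hc
    push_neg at hc
    exact hA (by ext i j; exact hc i j)
  have ha : 0 < a := by
    obtain ⟨t₀, j₀, h0⟩ := hentry X hX
    refine lt_of_lt_of_le ?_ (hcol j₀)
    apply Real.sqrt_pos.2
    calc (0:ℝ) < ‖X t₀ j₀‖ ^ 2 := pow_pos (norm_pos_iff.2 h0) 2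
      _ ≤ ∑ t, ‖X t j₀‖ ^ 2 := Finset.single_le_sum (f := fun t => ‖X t j₀‖ ^ 2)
          (fun t _ => sq_nonneg _) (Finset.mem_univ t₀)
  have hb : 0 < b := by
    obtain ⟨k₀, t₀, h0⟩ := hentry Y hY
    refine lt_of_lt_of_le ?_ (hrowf k₀)
    apply Real.sqrt_pos.2
    calc (0:ℝ) < ‖Y k₀ t₀‖ ^ 2 := pow_pos (norm_pos_iff.2 h0) 2
      _ ≤ ∑ t, ‖Y k₀ t‖ ^ 2 := Finset.single_le_sum (f := fun t => ‖Y k₀ t‖ ^ 2)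
          (fun t _ => sq_nonneg _) (Finset.mem_univ t₀)
  have hC : 0 < C := by
    obtain ⟨j₀, k₀, h0⟩ := hentry M hM
    have hsingle : ∑ j, ∑ k, (Pi.single j₀ 1 : Fin m → 𝕜) j * M j k
        * (Pi.single k₀ 1 : Fin n → 𝕜) k = M j₀ k₀ := by
      simp [Pi.single_apply]
    have hb1 : ∀ j, ‖(Pi.single j₀ 1 : Fin m → 𝕜) j‖ ≤ 1 := by
      intro j
      rcases eq_or_ne j j₀ with h | h
      · subst h; simp
      · simp [Pi.single_eq_of_ne h]
    have hb2 : ∀ k, ‖(Pi.single k₀ 1 : Fin n → 𝕜) k‖ ≤ 1 := by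
      intro k
      rcases eq_or_ne k k₀ with h | h
      · subst h; simp
      · simp [Pi.single_eq_of_ne h]
    have := hbil _ _ hb1 hb2
    rw [hsingle] at this
    exact lt_of_lt_of_le (norm_pos_iff.2 h0) this
  -- the pairing matrix
  set Bp : Fin m → Fin n → 𝕜 := fun j k => ∑ t, X t j * Y k t with hBpdef
  have htr : (X * M * Y).trace = ∑ j, ∑ k, M j k * Bp j k := by
    have h1 : (X * M * Y).trace = ∑ t, ∑ k, ∑ j, X t j * M j k * Y k t := by
      rw [Matrix.trace]
      refine Finset.sum_congr rfl fun t _ => ?_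
      rw [Matrix.diag_apply, Matrix.mul_apply]
      refine Finset.sum_congr rfl fun k _ => ?_
      rw [Matrix.mul_apply, Finset.sum_mul]
    rw [h1, sum_comm3]
    refine Finset.sum_congr rfl fun j _ => Finset.sum_congr rfl fun k _ => ?_
    rw [hBpdef]
    simp only
    rw [Finset.mul_sum]
    exact Finset.sum_congr rfl fun t _ => by ring
  -- real and imaginary parts
  set P : Matrix (Fin m) (Fin n) ℝ := fun j k => RCLike.re (M j k) / C with hPdef
  set Q : Matrix (Fin m) (Fin n) ℝ := fun j k => RCLike.im (M j k) / C with hQdef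
  -- vectors
  set xr : Fin m → (Fin l ⊕ Fin l) → ℝ := fun j => Sum.elim
    (fun t => RCLike.re (X t j) / a) (fun t => RCLike.im (X t j) / a) with hxrdef
  set yR : Fin n → (Fin l ⊕ Fin l) → ℝ := fun k => Sum.elim
    (fun t => RCLike.re (Y k t) / b) (fun t => -RCLike.im (Y k t) / b) with hyRdef
  set yS : Fin n → (Fin l ⊕ Fin l) → ℝ := fun k => Sum.elim
    (fun t => RCLike.im (Y k t) / b) (fun t => RCLike.re (Y k t) / b) with hySdef
  have hxr : ∀ j, ∑ t, xr j t ^ 2 ≤ 1 := by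
    intro j
    rw [Fintype.sum_sum_type]
    have : (∑ t, (RCLike.re (X t j) / a) ^ 2) + ∑ t, (RCLike.im (X t j) / a) ^ 2
        = (∑ t, ‖X t j‖ ^ 2) / a ^ 2 := by
      rw [Finset.sum_div, ← Finset.sum_add_distrib]
      refine Finset.sum_congr rfl fun t _ => ?_
      have h2 : ‖X t j‖ ^ 2 = RCLike.re (X t j) * RCLike.re (X t j)
          + RCLike.im (X t j) * RCLike.im (X t j) := RCLike.norm_sq_eq_def
      rw [h2]
      field_simp
      try ring
    rw [hxrdef]
    simp only [Sum.elim_inl, Sum.elim_inr]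
    rw [this, div_le_one (by positivity)]
    calc ∑ t, ‖X t j‖ ^ 2 = Real.sqrt (∑ t, ‖X t j‖ ^ 2) ^ 2 :=
          (Real.sq_sqrt (Finset.sum_nonneg fun t _ => sq_nonneg _)).symm
      _ ≤ a ^ 2 := by
          have := hcol j
          nlinarith [Real.sqrt_nonneg (∑ t, ‖X t j‖ ^ 2)]
  have hyR' : ∀ k, ∑ t, yR k t ^ 2 ≤ 1 := by
    intro k
    rw [Fintype.sum_sum_type]
    have : (∑ t, (RCLike.re (Y k t) / b) ^ 2) + ∑ t, (-RCLike.im (Y k t) / b) ^ 2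
        = (∑ t, ‖Y k t‖ ^ 2) / b ^ 2 := by
      rw [Finset.sum_div, ← Finset.sum_add_distrib]
      refine Finset.sum_congr rfl fun t _ => ?_
      have h2 : ‖Y k t‖ ^ 2 = RCLike.re (Y k t) * RCLike.re (Y k t)
          + RCLike.im (Y k t) * RCLike.im (Y k t) := RCLike.norm_sq_eq_def
      rw [h2]
      field_simp
      try ring
    rw [hyRdef]
    simp only [Sum.elim_inl, Sum.elim_inr]
    rw [this, div_le_one (by positivity)]
    calc ∑ t, ‖Y k t‖ ^ 2 = Real.sqrt (∑ t, ‖Y k t‖ ^ 2) ^ 2 :=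
          (Real.sq_sqrt (Finset.sum_nonneg fun t _ => sq_nonneg _)).symm
      _ ≤ b ^ 2 := by
          have := hrowf k
          nlinarith [Real.sqrt_nonneg (∑ t, ‖Y k t‖ ^ 2)]
  have hyS' : ∀ k, ∑ t, yS k t ^ 2 ≤ 1 := by
    intro k
    rw [Fintype.sum_sum_type]
    have : (∑ t, (RCLike.im (Y k t) / b) ^ 2) + ∑ t, (RCLike.re (Y k t) / b) ^ 2
        = (∑ t, ‖Y k t‖ ^ 2) / b ^ 2 := by
      rw [Finset.sum_div, ← Finset.sum_add_distrib]
      refine Finset.sum_congr rfl fun t _ => ?_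
      have h2 : ‖Y k t‖ ^ 2 = RCLike.re (Y k t) * RCLike.re (Y k t)
          + RCLike.im (Y k t) * RCLike.im (Y k t) := RCLike.norm_sq_eq_def
      rw [h2]
      field_simp
      try ring
    rw [hySdef]
    simp only [Sum.elim_inl, Sum.elim_inr]
    rw [this, div_le_one (by positivity)]
    calc ∑ t, ‖Y k t‖ ^ 2 = Real.sqrt (∑ t, ‖Y k t‖ ^ 2) ^ 2 :=
          (Real.sq_sqrt (Finset.sum_nonneg fun t _ => sq_nonneg _)).symm
      _ ≤ b ^ 2 := by
          have := hrowf k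
          nlinarith [Real.sqrt_nonneg (∑ t, ‖Y k t‖ ^ 2)]
  -- sign hypotheses
  have hsignP : ∀ (u : Fin m → ℝ) (v : Fin n → ℝ), (∀ i, |u i| ≤ 1) → (∀ j, |v j| ≤ 1) →
      |∑ i, ∑ j, P i j * (u i * v j)| ≤ 1 := by
    intro u v hu hv
    have hw := hbil (fun j => (u j : 𝕜)) (fun k => (v k : 𝕜))
      (fun j => by rw [RCLike.norm_ofReal]; exact hu j)
      (fun k => by rw [RCLike.norm_ofReal]; exact hv k)
    have hre : ∑ i, ∑ j, P i j * (u i * v j)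
        = RCLike.re (∑ j, ∑ k, (u j : 𝕜) * M j k * (v k : 𝕜)) / C := by
      rw [map_sum, Finset.sum_div]
      refine Finset.sum_congr rfl fun j _ => ?_
      rw [map_sum, Finset.sum_div]
      refine Finset.sum_congr rfl fun k _ => ?_
      have h3 : (u j : 𝕜) * M j k * (v k : 𝕜) = ((u j * v k : ℝ) : 𝕜) * M j k := by
        push_cast
        ring
      rw [h3, RCLike.re_ofReal_mul, hPdef]
      simp only
      ring
    rw [hre, abs_div, abs_of_pos hC, div_le_one hC]
    exact le_trans (RCLike.abs_re_le_norm _) hw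
  have hsignQ : ∀ (u : Fin m → ℝ) (v : Fin n → ℝ), (∀ i, |u i| ≤ 1) → (∀ j, |v j| ≤ 1) →
      |∑ i, ∑ j, Q i j * (u i * v j)| ≤ 1 := by
    intro u v hu hv
    have hw := hbil (fun j => (u j : 𝕜)) (fun k => (v k : 𝕜))
      (fun j => by rw [RCLike.norm_ofReal]; exact hu j)
      (fun k => by rw [RCLike.norm_ofReal]; exact hv k)
    have hre : ∑ i, ∑ j, Q i j * (u i * v j)
        = RCLike.im (∑ j, ∑ k, (u j : 𝕜) * M j k * (v k : 𝕜)) / C := by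
      rw [map_sum, Finset.sum_div]
      refine Finset.sum_congr rfl fun j _ => ?_
      rw [map_sum, Finset.sum_div]
      refine Finset.sum_congr rfl fun k _ => ?_
      have h3 : (u j : 𝕜) * M j k * (v k : 𝕜) = ((u j * v k : ℝ) : 𝕜) * M j k := by
        push_cast
        ring
      rw [h3, RCLike.im_ofReal_mul, hQdef]
      simp only
      ring
    rw [hre, abs_div, abs_of_pos hC, div_le_one hC]
    exact le_trans (RCLike.abs_im_le_norm _) hw
  -- pairing identities
  have hpairR : ∀ j k, ∑ t, xr j t * yR k t = RCLike.re (Bp j k) / (a * b) := by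
    intro j k
    rw [Fintype.sum_sum_type]
    have hR : RCLike.re (Bp j k) = ∑ t, (RCLike.re (X t j) * RCLike.re (Y k t)
        - RCLike.im (X t j) * RCLike.im (Y k t)) := by
      rw [hBpdef]
      simp only
      rw [map_sum]
      exact Finset.sum_congr rfl fun t _ => RCLike.mul_re _ _
    rw [hR, Finset.sum_div, ← Finset.sum_add_distrib]
    refine Finset.sum_congr rfl fun t _ => ?_
    rw [hxrdef, hyRdef]
    simp only [Sum.elim_inl, Sum.elim_inr]
    field_simp
    try ring
  have hpairS : ∀ j k, ∑ t, xr j t * yS k t = RCLike.im (Bp j k) / (a * b) := by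
    intro j k
    rw [Fintype.sum_sum_type]
    have hS : RCLike.im (Bp j k) = ∑ t, (RCLike.re (X t j) * RCLike.im (Y k t)
        + RCLike.im (X t j) * RCLike.re (Y k t)) := by
      rw [hBpdef]
      simp only
      rw [map_sum]
      exact Finset.sum_congr rfl fun t _ => RCLike.mul_im _ _
    rw [hS, Finset.sum_div, ← Finset.sum_add_distrib]
    refine Finset.sum_congr rfl fun t _ => ?_
    rw [hxrdef, hySdef]
    simp only [Sum.elim_inl, Sum.elim_inr]
    field_simp
    try ring
  -- the four GIneq applications
  have habC : 0 < C * (a * b) := by positivity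
  have main : ∀ (yv : Fin n → (Fin l ⊕ Fin l) → ℝ) (Av : Matrix (Fin m) (Fin n) ℝ)
      (F : Fin m → Fin n → ℝ),
      (∀ k, ∑ t, yv k t ^ 2 ≤ 1) →
      (∀ (u : Fin m → ℝ) (v : Fin n → ℝ), (∀ i, |u i| ≤ 1) → (∀ j, |v j| ≤ 1) →
        |∑ i, ∑ j, Av i j * (u i * v j)| ≤ 1) →
      (∀ j k, Av j k * (∑ t, xr j t * yv k t) = F j k / (C * (a * b))) →
      |∑ j, ∑ k, F j k| ≤ 96 * (C * (a * b)) := by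
    intro yv Av F hyv hsign hFact
    have h96 := gineq_main m n (Fin l ⊕ Fin l) xr yv Av hxr hyv hsign
    have heq : ∑ j, ∑ k, Av j k * (∑ t, xr j t * yv k t)
        = (∑ j, ∑ k, F j k) / (C * (a * b)) := by
      rw [Finset.sum_div]
      refine Finset.sum_congr rfl fun j _ => ?_
      rw [Finset.sum_div]
      exact Finset.sum_congr rfl fun k _ => hFact j k
    rw [heq, abs_div, abs_of_pos habC, div_le_iff₀ habC] at h96
    linarith
  have hPR := main yR P (fun j k => RCLike.re (M j k) * RCLike.re (Bp j k)) hyR' hsignP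
    (by
      intro j k
      rw [hpairR, hPdef]
      simp only
      field_simp
      try ring)
  have hQS := main yS Q (fun j k => RCLike.im (M j k) * RCLike.im (Bp j k)) hyS' hsignQ
    (by
      intro j k
      rw [hpairS, hQdef]
      simp only
      field_simp
      try ring)
  have hPS := main yS P (fun j k => RCLike.re (M j k) * RCLike.im (Bp j k)) hyS' hsignP
    (by
      intro j k
      rw [hpairS, hPdef]
      simp only
      field_simp
      try ring)
  have hQR := main yR Q (fun j k => RCLike.im (M j k) * RCLike.re (Bp j k)) hyR' hsignQ
    (by
      intro j k
      rw [hpairR, hQdef]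
      simp only
      field_simp
      try ring)
  -- combine
  have hreT : RCLike.re ((X * M * Y).trace)
      = (∑ j, ∑ k, RCLike.re (M j k) * RCLike.re (Bp j k))
        - ∑ j, ∑ k, RCLike.im (M j k) * RCLike.im (Bp j k) := by
    rw [htr, map_sum, ← Finset.sum_sub_distrib]
    refine Finset.sum_congr rfl fun j _ => ?_
    rw [map_sum, ← Finset.sum_sub_distrib]
    exact Finset.sum_congr rfl fun k _ => RCLike.mul_re _ _
  have himT : RCLike.im ((X * M * Y).trace)
      = (∑ j, ∑ k, RCLike.re (M j k) * RCLike.im (Bp j k))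
        + ∑ j, ∑ k, RCLike.im (M j k) * RCLike.re (Bp j k) := by
    rw [htr, map_sum, ← Finset.sum_add_distrib]
    refine Finset.sum_congr rfl fun j _ => ?_
    rw [map_sum, ← Finset.sum_add_distrib]
    exact Finset.sum_congr rfl fun k _ => RCLike.mul_im _ _
  have hfinal : ‖(X * M * Y).trace‖ ≤ 384 * (C * (a * b)) := by
    calc ‖(X * M * Y).trace‖
        ≤ |RCLike.re ((X * M * Y).trace)| + |RCLike.im ((X * M * Y).trace)| :=
          norm_le_re_add_im _
      _ ≤ 384 * (C * (a * b)) := by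
          rw [hreT, himT]
          have h1 := abs_sub (∑ j, ∑ k, RCLike.re (M j k) * RCLike.re (Bp j k))
            (∑ j, ∑ k, RCLike.im (M j k) * RCLike.im (Bp j k))
          have h2 := abs_add_le (∑ j, ∑ k, RCLike.re (M j k) * RCLike.im (Bp j k))
            (∑ j, ∑ k, RCLike.im (M j k) * RCLike.re (Bp j k))
          linarith
  calc ‖(X * M * Y).trace‖ ≤ 384 * (C * (a * b)) := hfinal
    _ = 384 * (a * b * C) := by ring
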